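/- With X, T, and the metric d as in the standing construction, the metric completion (T̄, d) of (T, d) is locally connected. -/

import Mathlib

/-- `A` is an arc in `X` joining `x` and `y`: the image of a continuous injection
from `[0,1]` sending `0` to `x` and `1` to `y`. -/
def IsArcBetween {X : Type*} [TopologicalSpace X] (A : Set X) (x y : X) : Prop :=
  ∃ f : unitInterval → X, Continuous f ∧ Function.Injective f ∧
    f 0 = x ∧ f 1 = y ∧ Set.range f = A

/-- `A` is an arc in `X` (a subspace homeomorphic to `[0,1]`). -/
def IsArc {X : Type*} [TopologicalSpace X] (A : Set X) : Prop :=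
  ∃ x y, IsArcBetween A x y

/-- `X` is uniquely arcwise connected: any two distinct points are joined by a unique arc. -/
def UniquelyArcwiseConnected (X : Type*) [TopologicalSpace X] : Prop :=
  ∀ x y : X, x ≠ y → ∃! A : Set X, IsArcBetween A x y

/-- A dendrite: a (metrizable) continuum which is locally connected and uniquely
arcwise connected. -/
def IsDendrite (X : Type*) [TopologicalSpace X] : Prop :=
  Nonempty X ∧ CompactSpace X ∧ ConnectedSpace X ∧
    TopologicalSpace.MetrizableSpace X ∧ LocallyConnectedSpace X ∧
    UniquelyArcwiseConnected X

/-- A subset `Y` of `X` is a tree: it is a dendrite (with the subspace topology)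
which is the union of finitely many arcs. -/
def IsTree {X : Type*} [TopologicalSpace X] (Y : Set X) : Prop :=
  IsDendrite Y ∧ ∃ (n : ℕ) (A : Fin n → Set X), (∀ i, IsArc (A i)) ∧ Y = ⋃ i, A i

/-- The arc `[x, y]` in a uniquely arcwise connected space (`{x}` if `x = y`). -/
noncomputable def arcOf {X : Type*} [TopologicalSpace X]
    (hX : UniquelyArcwiseConnected X) (x y : X) : Set X :=
  letI : Decidable (x = y) := Classical.dec _
  if h : x = y then {x} else (hX x y h).choose

/-- The standing construction: in a uniquely arcwise connected continuum `X`, a strictly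
increasing sequence of trees `T n = I 0 ∪ ... ∪ I n` built from arcs `I i` meeting
pairwise in at most a point, together with homeomorphisms `h i : I i → [0,1]`. -/
structure StandingConstruction (X : Type*) [MetricSpace X] where
  /-- `X` is uniquely arcwise connected. -/
  huac : UniquelyArcwiseConnected X
  /-- the arcs `I i` -/
  I : ℕ → Set X
  arc_I : ∀ i, IsArc (I i)
  /-- distinct arcs meet in at most one point -/
  inter_I : ∀ i j, i ≠ j → (I i ∩ I j).Subsingleton
  /-- each partial union `T n = ⋃_{i ≤ n} I i` is a tree -/
  tree_T : ∀ n : ℕ, IsTree (⋃ i ≤ n, I i)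
  /-- the sequence of trees is strictly increasing -/
  strict_T : ∀ n : ℕ, (⋃ i ≤ n, I i) ⊂ ⋃ i ≤ n + 1, I i
  /-- the homeomorphisms `h i : I i → [0,1]` -/
  h : ℕ → X → ℝ
  h_cont : ∀ i, ContinuousOn (h i) (I i)
  h_inj : ∀ i, Set.InjOn (h i) (I i)
  h_image : ∀ i, h i '' I i = Set.Icc (0 : ℝ) 1

/-- The tree `T n` of the standing construction. -/
def StandingConstruction.Tn {X : Type*} [MetricSpace X]
    (sc : StandingConstruction X) (n : ℕ) : Set X :=
  ⋃ i ≤ n, sc.I i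

/-- The set `T = ⋃ n T n` of the standing construction. -/
def StandingConstruction.T {X : Type*} [MetricSpace X]
    (sc : StandingConstruction X) : Set X :=
  ⋃ i, sc.I i

/-- The metric `d(x,y) = ∑ i 2^{-(i+1)} l(h i ([x,y] ∩ I i))` of the standing
construction, where `l` is the length (diameter) of a subinterval of `[0,1]`. -/
noncomputable def StandingConstruction.d {X : Type*} [MetricSpace X]
    (sc : StandingConstruction X) (x y : X) : ℝ :=
  ∑' i : ℕ, (2 : ℝ)⁻¹ ^ (i + 1) *
    Metric.diam (sc.h i '' (arcOf sc.huac x y ∩ sc.I i))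
section MyAux
variable {X : Type*} [TopologicalSpace X]

theorem isArcBetween_symm {A : Set X} {x y : X} (h : IsArcBetween A x y) :
    IsArcBetween A y x := by
  obtain ⟨f, hc, hi, h0, h1, hr⟩ := h
  refine ⟨f ∘ unitInterval.symm, hc.comp unitInterval.continuous_symm,
    hi.comp (fun a b hab => by simpa using congrArg unitInterval.symm hab), by simpa, by simpa, ?_⟩
  rw [Set.range_comp, ← hr]
  exact congrArg _ (Set.range_eq_univ.mpr (fun a => ⟨unitInterval.symm a, by simp⟩)) |>.trans
    (by simp [Set.image_univ])

theorem arcOf_self (hX : UniquelyArcwiseConnected X) (x : X) : arcOf hX x x = {x} := by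
  simp [arcOf]

theorem isArcBetween_arcOf (hX : UniquelyArcwiseConnected X) {x y : X} (h : x ≠ y) :
    IsArcBetween (arcOf hX x y) x y := by
  rw [arcOf]; simp only [dif_neg h]
  exact (hX x y h).choose_spec.1

theorem arcOf_eq (hX : UniquelyArcwiseConnected X) {A : Set X} {x y : X} (h : x ≠ y)
    (hA : IsArcBetween A x y) : arcOf hX x y = A := by
  rw [arcOf]; simp only [dif_neg h]
  exact ((hX x y h).choose_spec.2 A hA).symm

theorem arcOf_comm (hX : UniquelyArcwiseConnected X) (x y : X) :
    arcOf hX x y = arcOf hX y x := by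
  by_cases h : x = y
  · subst h; rfl
  · exact arcOf_eq hX h (isArcBetween_symm (isArcBetween_arcOf hX (Ne.symm h)))

theorem left_mem_arcOf (hX : UniquelyArcwiseConnected X) (x y : X) : x ∈ arcOf hX x y := by
  by_cases h : x = y
  · subst h; simp [arcOf_self]
  · obtain ⟨f, _, _, h0, _, hr⟩ := isArcBetween_arcOf hX h
    rw [← hr, ← h0]; exact Set.mem_range_self _

theorem right_mem_arcOf (hX : UniquelyArcwiseConnected X) (x y : X) : y ∈ arcOf hX x y := by
  rw [arcOf_comm]; exact left_mem_arcOf hX y x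

theorem arcOf_subarc (hX : UniquelyArcwiseConnected X) {f : unitInterval → X}
    (hc : Continuous f) (hi : Function.Injective f) (s t : unitInterval) (hst : (s:ℝ) ≤ t) :
    arcOf hX (f s) (f t) = f '' {u : unitInterval | (s:ℝ) ≤ u ∧ (u:ℝ) ≤ t} := by
  rcases eq_or_lt_of_le hst with heq | hlt
  · have hst' : s = t := Subtype.ext heq
    subst hst'
    have : {u : unitInterval | (s:ℝ) ≤ u ∧ (u:ℝ) ≤ s} = {s} := by
      ext u; simp only [Set.mem_setOf_eq, Set.mem_singleton_iff]
      constructor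
      · rintro ⟨h1, h2⟩; exact Subtype.ext (le_antisymm h2 h1)
      · rintro rfl; exact ⟨le_refl _, le_refl _⟩
    rw [this, arcOf_self, Set.image_singleton]
  · have hne : s ≠ t := fun h => absurd (congrArg Subtype.val h) (ne_of_lt hlt)
    have hfst : f s ≠ f t := fun h => hne (hi h)
    have hpos : (0:ℝ) < (t:ℝ) - s := by linarith
    obtain ⟨g, hgc, hgi, hg0, hg1, hgr⟩ :
        ∃ g : unitInterval → unitInterval, Continuous g ∧ Function.Injective g ∧
          g 0 = s ∧ g 1 = t ∧ Set.range g = {u : unitInterval | (s:ℝ) ≤ u ∧ (u:ℝ) ≤ t} := by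
      refine ⟨fun u => ⟨(s:ℝ) + u * ((t:ℝ) - s), ?_, ?_⟩, ?_, ?_, ?_, ?_, ?_⟩
      · nlinarith [u.2.1, u.2.2, s.2.1]
      · nlinarith [u.2.1, u.2.2, t.2.2]
      · exact Continuous.subtype_mk (by fun_prop) _
      · intro a b hab
        have h1 : (s:ℝ) + a * ((t:ℝ) - s) = (s:ℝ) + b * ((t:ℝ) - s) := congrArg Subtype.val hab
        exact Subtype.ext (mul_right_cancel₀ (ne_of_gt hpos) (by linarith))
      · exact Subtype.ext (by simp)
      · exact Subtype.ext (by simp)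
      · ext u
        constructor
        · rintro ⟨v, rfl⟩
          exact ⟨by simp only; nlinarith [v.2.1, v.2.2], by simp only; nlinarith [v.2.1, v.2.2]⟩
        · rintro ⟨h1, h2⟩
          refine ⟨⟨((u:ℝ) - s) / ((t:ℝ) - s), div_nonneg (by linarith) hpos.le, ?_⟩, ?_⟩
          · rw [div_le_one hpos]; linarith
          · apply Subtype.ext; simp only; field_simp; ring
    refine arcOf_eq hX hfst ⟨f ∘ g, hc.comp hgc, hi.comp hgi, by simp [hg0], by simp [hg1], ?_⟩
    rw [Set.range_comp, hgr]

theorem arcOf_subarc' (hX : UniquelyArcwiseConnected X) {f : unitInterval → X}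
    (hc : Continuous f) (hi : Function.Injective f) (s t : unitInterval) :
    arcOf hX (f s) (f t) =
      f '' {u : unitInterval | min (s:ℝ) t ≤ u ∧ (u:ℝ) ≤ max (s:ℝ) t} := by
  rcases le_total (s:ℝ) t with h | h
  · rw [min_eq_left h, max_eq_right h]; exact arcOf_subarc hX hc hi s t h
  · rw [min_eq_right h, max_eq_left h, arcOf_comm]; exact arcOf_subarc hX hc hi t s h

theorem arcOf_subset_range (hX : UniquelyArcwiseConnected X) {f : unitInterval → X}
    (hc : Continuous f) (hi : Function.Injective f) {z w : X}
    (hz : z ∈ Set.range f) (hw : w ∈ Set.range f) :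
    arcOf hX z w ⊆ Set.range f := by
  obtain ⟨s, rfl⟩ := hz; obtain ⟨t, rfl⟩ := hw
  rw [arcOf_subarc' hX hc hi]
  exact Set.image_subset_range _ _

end MyAux

section SecB
variable {X : Type*} [MetricSpace X]

theorem val_image_isArcBetween {S : Set X} {A : Set ↥S} {x y : ↥S}
    (h : IsArcBetween A x y) : IsArcBetween (Subtype.val '' A) (x : X) (y : X) := by
  obtain ⟨f, hc, hi, h0, h1, hr⟩ := h
  refine ⟨Subtype.val ∘ f, continuous_subtype_val.comp hc,
    Subtype.val_injective.comp hi, by simp [h0], by simp [h1], ?_⟩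
  rw [Set.range_comp, hr]

theorem StandingConstruction.arcOf_subset_T (sc : StandingConstruction X) {a b : X}
    (ha : a ∈ sc.T) (hb : b ∈ sc.T) : arcOf sc.huac a b ⊆ sc.T := by
  by_cases hab : a = b
  · subst hab; rw [arcOf_self]
    exact Set.singleton_subset_iff.mpr ha
  · obtain ⟨i, hi⟩ := Set.mem_iUnion.mp ha
    obtain ⟨j, hj⟩ := Set.mem_iUnion.mp hb
    set n := max i j
    have haS : a ∈ ⋃ k ≤ n, sc.I k :=
      Set.mem_iUnion₂.mpr ⟨i, le_max_left _ _, hi⟩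
    have hbS : b ∈ ⋃ k ≤ n, sc.I k :=
      Set.mem_iUnion₂.mpr ⟨j, le_max_right _ _, hj⟩
    have huacS : UniquelyArcwiseConnected ↥(⋃ k ≤ n, sc.I k) :=
      (sc.tree_T n).1.2.2.2.2.2
    have hne : (⟨a, haS⟩ : ↥(⋃ k ≤ n, sc.I k)) ≠ ⟨b, hbS⟩ :=
      fun h => hab (congrArg Subtype.val h)
    obtain ⟨A, hA, -⟩ := huacS ⟨a, haS⟩ ⟨b, hbS⟩ hne
    have : arcOf sc.huac a b = Subtype.val '' A :=
      arcOf_eq sc.huac hab (val_image_isArcBetween hA)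
    rw [this]
    intro z hz
    obtain ⟨w, -, rfl⟩ := hz
    obtain ⟨k, -, hk⟩ := Set.mem_iUnion₂.mp w.2
    exact Set.mem_iUnion.mpr ⟨k, hk⟩

-- Section C : estimates for d
theorem StandingConstruction.diam_term_le_one (sc : StandingConstruction X) (A : Set X) (i : ℕ) :
    Metric.diam (sc.h i '' (A ∩ sc.I i)) ≤ 1 := by
  have hsub : sc.h i '' (A ∩ sc.I i) ⊆ Set.Icc (0:ℝ) 1 := by
    rw [← sc.h_image i]
    exact Set.image_mono Set.inter_subset_right
  calc Metric.diam (sc.h i '' (A ∩ sc.I i)) ≤ Metric.diam (Set.Icc (0:ℝ) 1) :=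
        Metric.diam_mono hsub (Metric.isBounded_Icc 0 1)
    _ = 1 := by rw [Real.diam_Icc (by norm_num)]; norm_num

theorem StandingConstruction.summable_terms (sc : StandingConstruction X) (A : Set X) :
    Summable (fun i : ℕ => (2:ℝ)⁻¹ ^ (i + 1) * Metric.diam (sc.h i '' (A ∩ sc.I i))) := by
  have hg : Summable (fun i : ℕ => ((2:ℝ)⁻¹)^(i+1)) := by
    have := summable_geometric_of_lt_one (r := (2:ℝ)⁻¹) (by norm_num) (by norm_num)
    simpa [pow_succ] using this.mul_right 2⁻¹
  refine Summable.of_nonneg_of_le (fun i => ?_) (fun i => ?_) hg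
  · exact mul_nonneg (by positivity) Metric.diam_nonneg
  · calc (2:ℝ)⁻¹ ^ (i + 1) * Metric.diam (sc.h i '' (A ∩ sc.I i))
        ≤ (2:ℝ)⁻¹ ^ (i + 1) * 1 :=
          mul_le_mul_of_nonneg_left (sc.diam_term_le_one A i) (by positivity)
    _ = (2:ℝ)⁻¹ ^ (i + 1) := mul_one _

theorem StandingConstruction.d_mono (sc : StandingConstruction X) {p q a b : X}
    (hsub : arcOf sc.huac p q ⊆ arcOf sc.huac a b) : sc.d p q ≤ sc.d a b := by
  refine Summable.tsum_le_tsum (fun i => ?_) (sc.summable_terms _) (sc.summable_terms _)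
  refine mul_le_mul_of_nonneg_left ?_ (by positivity)
  refine Metric.diam_mono (Set.image_mono (Set.inter_subset_inter_left _ hsub)) ?_
  have : sc.h i '' (arcOf sc.huac a b ∩ sc.I i) ⊆ Set.Icc (0:ℝ) 1 := by
    rw [← sc.h_image i]; exact Set.image_mono Set.inter_subset_right
  exact (Metric.isBounded_Icc 0 1).subset this

end SecB

section SecD

theorem abs_sub_le_of_between {s a b : ℝ} (h1 : min a b ≤ s) (h2 : s ≤ max a b) :
    |s - b| ≤ |a - b| := by
  rcases le_total a b with h | h
  · rw [min_eq_left h] at h1; rw [max_eq_right h] at h2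
    rw [abs_of_nonpos (by linarith), abs_of_nonpos (by linarith)]; linarith
  · rw [min_eq_right h] at h1; rw [max_eq_left h] at h2
    rw [abs_of_nonneg (by linarith), abs_of_nonneg (by linarith)]; linarith

variable {X : Type*} [MetricSpace X]

theorem StandingConstruction.term_le (sc : StandingConstruction X) (A : Set X) (i : ℕ) :
    (2:ℝ)⁻¹ ^ (i + 1) * Metric.diam (sc.h i '' (A ∩ sc.I i)) ≤ (2:ℝ)⁻¹ ^ (i + 1) := by
  calc (2:ℝ)⁻¹ ^ (i + 1) * Metric.diam (sc.h i '' (A ∩ sc.I i))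
      ≤ (2:ℝ)⁻¹ ^ (i + 1) * 1 :=
        mul_le_mul_of_nonneg_left (sc.diam_term_le_one A i) (by positivity)
    _ = (2:ℝ)⁻¹ ^ (i + 1) := mul_one _

theorem StandingConstruction.isClosed_I (sc : StandingConstruction X) (i : ℕ) :
    IsClosed (sc.I i) := by
  obtain ⟨x, y, f, hc, -, -, -, hr⟩ := sc.arc_I i
  rw [← hr]
  exact (isCompact_range hc).isClosed

/-- Per-index continuity of the diameter term along the arc. -/
theorem StandingConstruction.diam_term_tendsto (sc : StandingConstruction X)
    {f : unitInterval → X} (hc : Continuous f) (hi : Function.Injective f)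
    (t0 : unitInterval) (i : ℕ) :
    Filter.Tendsto
      (fun t => Metric.diam (sc.h i '' (arcOf sc.huac (f t) (f t0) ∩ sc.I i)))
      (nhds t0) (nhds 0) := by
  set D : unitInterval → ℝ :=
    fun t => Metric.diam (sc.h i '' (arcOf sc.huac (f t) (f t0) ∩ sc.I i)) with hD
  rw [Metric.tendsto_nhds]
  by_contra hcon
  push_neg at hcon
  obtain ⟨ε, hε, hfreq⟩ := hcon
  have main : ∀ n : ℕ, ∃ s u : unitInterval,
      |(s:ℝ) - t0| < 1/(n+1) ∧ |(u:ℝ) - t0| < 1/(n+1) ∧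
      f s ∈ sc.I i ∧ f u ∈ sc.I i ∧
      ε/2 < dist (sc.h i (f s)) (sc.h i (f u)) := by
    intro n
    have hrad : (0:ℝ) < 1/(n+1) := by positivity
    obtain ⟨t, htball, htD⟩ := (Metric.nhds_basis_ball.frequently_iff).mp hfreq _ hrad
    have hεD : ε ≤ D t := by
      have := htD
      simp only [Real.dist_eq, not_lt] at this
      calc ε ≤ |D t - 0| := this
        _ = D t := by rw [sub_zero, abs_of_nonneg Metric.diam_nonneg]
    have harc := arcOf_subarc' sc.huac hc hi t t0
    have hnd : ¬ (D t ≤ ε/2) := by linarith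
    have hex : ∃ p ∈ sc.h i '' (arcOf sc.huac (f t) (f t0) ∩ sc.I i),
        ∃ q ∈ sc.h i '' (arcOf sc.huac (f t) (f t0) ∩ sc.I i), ε/2 < dist p q := by
      by_contra hall
      push_neg at hall
      exact hnd (Metric.diam_le_of_forall_dist_le (by linarith) hall)
    obtain ⟨p, hp, q, hq, hpq⟩ := hex
    obtain ⟨x, ⟨hxarc, hxI⟩, rfl⟩ := hp
    obtain ⟨y, ⟨hyarc, hyI⟩, rfl⟩ := hq
    rw [harc] at hxarc hyarc
    obtain ⟨s, hsJ, rfl⟩ := hxarc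
    obtain ⟨u, huJ, rfl⟩ := hyarc
    have hs' : |(s:ℝ) - t0| < 1/(n+1) := by
      have := abs_sub_le_of_between hsJ.1 hsJ.2
      have ht' : |(t:ℝ) - t0| < 1/(n+1) := by
        have := htball
        rwa [Metric.mem_ball, Subtype.dist_eq, Real.dist_eq] at this
      linarith
    have hu' : |(u:ℝ) - t0| < 1/(n+1) := by
      have := abs_sub_le_of_between huJ.1 huJ.2
      have ht' : |(t:ℝ) - t0| < 1/(n+1) := by
        have := htball
        rwa [Metric.mem_ball, Subtype.dist_eq, Real.dist_eq] at this
      linarith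
    exact ⟨s, u, hs', hu', hxI, hyI, hpq⟩
  choose s u hs hu hsI huI hdist using main
  -- the sequences s n, u n tend to t0
  have hstend : Filter.Tendsto s Filter.atTop (nhds t0) := by
    rw [tendsto_iff_dist_tendsto_zero]
    refine squeeze_zero (g := fun n : ℕ => 1/(n+1)) (fun n => dist_nonneg) (fun n => ?_)
      tendsto_one_div_add_atTop_nhds_zero_nat
    rw [Subtype.dist_eq, Real.dist_eq]; exact (hs n).le
  have hutend : Filter.Tendsto u Filter.atTop (nhds t0) := by
    rw [tendsto_iff_dist_tendsto_zero]
    refine squeeze_zero (g := fun n : ℕ => 1/(n+1)) (fun n => dist_nonneg) (fun n => ?_)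
      tendsto_one_div_add_atTop_nhds_zero_nat
    rw [Subtype.dist_eq, Real.dist_eq]; exact (hu n).le
  have hfs : Filter.Tendsto (fun n => f (s n)) Filter.atTop (nhds (f t0)) :=
    (hc.tendsto t0).comp hstend
  have hfu : Filter.Tendsto (fun n => f (u n)) Filter.atTop (nhds (f t0)) :=
    (hc.tendsto t0).comp hutend
  have hft0 : f t0 ∈ sc.I i :=
    (sc.isClosed_I i).mem_of_tendsto hfs (Filter.Eventually.of_forall hsI)
  have hhs : Filter.Tendsto (fun n => sc.h i (f (s n))) Filter.atTop
      (nhds (sc.h i (f t0))) := by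
    refine ((sc.h_cont i (f t0) hft0).tendsto).comp ?_
    exact tendsto_nhdsWithin_iff.mpr ⟨hfs, Filter.Eventually.of_forall hsI⟩
  have hhu : Filter.Tendsto (fun n => sc.h i (f (u n))) Filter.atTop
      (nhds (sc.h i (f t0))) := by
    refine ((sc.h_cont i (f t0) hft0).tendsto).comp ?_
    exact tendsto_nhdsWithin_iff.mpr ⟨hfu, Filter.Eventually.of_forall huI⟩
  have hd0 : Filter.Tendsto (fun n => dist (sc.h i (f (s n))) (sc.h i (f (u n))))
      Filter.atTop (nhds 0) := by
    have := hhs.dist hhu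
    simpa using this
  have := (hd0.eventually_lt_const (half_pos hε)).exists
  obtain ⟨n, hn⟩ := this
  exact absurd (hdist n) (not_lt.mpr hn.le)

end SecD

section SecE
set_option maxHeartbeats 1000000 in
theorem _dummy_placeholder : True := trivial
variable {X Y : Type*} [MetricSpace X] [MetricSpace Y]

set_option maxHeartbeats 1000000 in
theorem StandingConstruction.continuous_arcMap (sc : StandingConstruction X)
    (ι : sc.T → Y) (hiso : ∀ a b : sc.T, dist (ι a) (ι b) = sc.d a b)
    {f : unitInterval → X} (hc : Continuous f) (hi : Function.Injective f)
    (hmemT : ∀ t, f t ∈ sc.T) :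
    Continuous (fun t => ι ⟨f t, hmemT t⟩) := by
  rw [continuous_iff_continuousAt]
  intro t0
  rw [ContinuousAt, Metric.tendsto_nhds]
  intro ε hε
  obtain ⟨N, hN⟩ : ∃ N : ℕ, ((2:ℝ)⁻¹)^N < ε/2 :=
    exists_pow_lt_of_lt_one (half_pos hε) (by norm_num)
  have hsum0 : Filter.Tendsto
      (fun t => ∑ i ∈ Finset.range N, (2:ℝ)⁻¹ ^ (i + 1) *
        Metric.diam (sc.h i '' (arcOf sc.huac (f t) (f t0) ∩ sc.I i)))
      (nhds t0) (nhds 0) := by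
    have := tendsto_finset_sum (f := fun i t => (2:ℝ)⁻¹ ^ (i + 1) *
        Metric.diam (sc.h i '' (arcOf sc.huac (f t) (f t0) ∩ sc.I i)))
      (Finset.range N)
      (fun i _ => ((sc.diam_term_tendsto hc hi t0 i).const_mul ((2:ℝ)⁻¹ ^ (i + 1))))
    simpa using this
  filter_upwards [hsum0.eventually_lt_const (half_pos hε)] with t ht
  have hdd : dist (ι ⟨f t, hmemT t⟩) (ι ⟨f t0, hmemT t0⟩) = sc.d (f t) (f t0) :=
    hiso _ _
  rw [hdd]
  set A := arcOf sc.huac (f t) (f t0) with hA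
  have hsumm := sc.summable_terms A
  have hsplit := Summable.sum_add_tsum_nat_add N hsumm
  have htail : (∑' i : ℕ, (2:ℝ)⁻¹ ^ (i + N + 1) *
      Metric.diam (sc.h (i + N) '' (A ∩ sc.I (i + N)))) ≤ (2:ℝ)⁻¹ ^ N := by
    have hgeo : Summable (fun i : ℕ => ((2:ℝ)⁻¹)^(i+N+1)) := by
      have hg : Summable (fun i : ℕ => ((2:ℝ)⁻¹)^i) :=
        summable_geometric_of_lt_one (by norm_num) (by norm_num)
      simpa [pow_add, mul_assoc] using hg.mul_right (((2:ℝ)⁻¹)^N * (2:ℝ)⁻¹)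
    have h1 : ∀ i : ℕ, (2:ℝ)⁻¹ ^ (i + N + 1) *
        Metric.diam (sc.h (i + N) '' (A ∩ sc.I (i + N))) ≤ (2:ℝ)⁻¹ ^ (i + N + 1) :=
      fun i => sc.term_le A (i + N)
    calc (∑' i : ℕ, (2:ℝ)⁻¹ ^ (i + N + 1) *
          Metric.diam (sc.h (i + N) '' (A ∩ sc.I (i + N))))
        ≤ ∑' i : ℕ, ((2:ℝ)⁻¹)^(i+N+1) :=
          Summable.tsum_le_tsum h1 ((summable_nat_add_iff N).mpr hsumm) hgeo
      _ = (∑' i : ℕ, ((2:ℝ)⁻¹)^i) * (((2:ℝ)⁻¹)^N * (2:ℝ)⁻¹) := by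
          rw [← tsum_mul_right]
          congr 1; funext i; rw [pow_add, pow_add]; ring
      _ = (2:ℝ)⁻¹ ^ N := by
          rw [tsum_geometric_of_lt_one (by norm_num) (by norm_num)]
          norm_num
          ring
  have hdistlt : sc.d (f t) (f t0) < ε := by
    rw [StandingConstruction.d, ← hA, ← hsplit]
    have := ht
    linarith
  exact hdistlt

theorem StandingConstruction.arc_image_preconnected (sc : StandingConstruction X)
    (ι : sc.T → Y) (hiso : ∀ a b : sc.T, dist (ι a) (ι b) = sc.d a b) (a b : sc.T) :
    IsPreconnected (ι '' {z : sc.T | (z : X) ∈ arcOf sc.huac ↑a ↑b}) := by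
  by_cases hab : (a : X) = (b : X)
  · have h1 : arcOf sc.huac ↑a ↑b = {(a : X)} := by rw [hab, arcOf_self]
    have h2 : {z : sc.T | (z : X) ∈ arcOf sc.huac ↑a ↑b} = {a} := by
      ext z
      simp only [h1, Set.mem_setOf_eq, Set.mem_singleton_iff]
      exact ⟨fun h => Subtype.ext h, fun h => congrArg Subtype.val h⟩
    rw [h2, Set.image_singleton]
    exact isPreconnected_singleton
  · obtain ⟨f, hc, hi, h0, h1, hr⟩ := isArcBetween_arcOf sc.huac hab
    have hmemT : ∀ t, f t ∈ sc.T :=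
      fun t => sc.arcOf_subset_T a.2 b.2 (hr ▸ Set.mem_range_self t)
    have hrange : Set.range (fun t => ι ⟨f t, hmemT t⟩) =
        ι '' {z : sc.T | (z : X) ∈ arcOf sc.huac ↑a ↑b} := by
      ext y
      constructor
      · rintro ⟨t, rfl⟩
        exact ⟨⟨f t, hmemT t⟩, by simp only [Set.mem_setOf_eq, ← hr]; exact Set.mem_range_self t, rfl⟩
      · rintro ⟨z, hz, rfl⟩
        rw [Set.mem_setOf_eq, ← hr] at hz
        obtain ⟨t, ht⟩ := hz
        exact ⟨t, congrArg ι (Subtype.ext ht)⟩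
    rw [← hrange]
    exact isPreconnected_range (sc.continuous_arcMap ι hiso hc hi hmemT)

end SecE


/-- **Claim B of Proposition 3.1.** The metric completion `(T̄, d)` of `(T, d)` from the
standing construction is locally connected. Here the completion is formalized as a
complete metric space `Y` together with a map `ι : T → Y` which is isometric for `d`
and has dense range. -/
theorem sc_completion_locallyConnected
    {X Y : Type*} [MetricSpace X] [CompactSpace X] [ConnectedSpace X] [Nonempty X]
    [MetricSpace Y] [CompleteSpace Y]
    (sc : StandingConstruction X) (ι : sc.T → Y)
    (hiso : ∀ a b : sc.T, dist (ι a) (ι b) = sc.d a b)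
    (hdense : DenseRange ι) :
    LocallyConnectedSpace Y := by
  rw [locallyConnectedSpace_iff_connected_subsets]
  intro p U hU
  obtain ⟨ε, hε, hball⟩ := Metric.mem_nhds_iff.mp hU
  obtain ⟨x, hx⟩ := hdense.exists_dist_lt p (by positivity : (0:ℝ) < ε/4)
  set B : Set sc.T := {z : sc.T | dist (ι x) (ι z) < ε/2} with hB
  have hpre : IsPreconnected (ι '' B) := by
    set c : Set (Set Y) :=
      (fun y : sc.T => ι '' {z : sc.T | (z : X) ∈ arcOf sc.huac ↑x ↑y}) '' B with hc
    have hU1 : ⋃₀ c = ι '' B := by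
      ext w
      constructor
      · rintro ⟨S, ⟨y, hyB, rfl⟩, ⟨z, hz, rfl⟩⟩
        refine ⟨z, ?_, rfl⟩
        rw [Set.mem_setOf_eq] at hz
        have hdxz : sc.d ↑x ↑z ≤ sc.d ↑x ↑y := by
          by_cases hxy : (x : X) = (y : X)
          · rw [hxy, arcOf_self] at hz
            have hz' : (z : X) = (y : X) := hz
            rw [hz']
          · obtain ⟨f, hfc, hfi, h0, h1, hr⟩ := isArcBetween_arcOf sc.huac hxy
            apply sc.d_mono
            have hxr : (x : X) ∈ Set.range f := by rw [hr]; exact left_mem_arcOf _ _ _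
            have hzr : (z : X) ∈ Set.range f := by rw [hr]; exact hz
            calc arcOf sc.huac ↑x ↑z ⊆ Set.range f := arcOf_subset_range sc.huac hfc hfi hxr hzr
              _ = arcOf sc.huac ↑x ↑y := hr
        have : dist (ι x) (ι z) ≤ dist (ι x) (ι y) := by rw [hiso, hiso]; exact hdxz
        exact lt_of_le_of_lt this hyB
      · rintro ⟨z, hzB, rfl⟩
        exact ⟨_, ⟨z, hzB, rfl⟩, ⟨z, right_mem_arcOf _ _ _, rfl⟩⟩
    rw [← hU1]
    refine isPreconnected_sUnion (ι x) c ?_ ?_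
    · rintro S ⟨y, hyB, rfl⟩
      exact ⟨x, left_mem_arcOf _ _ _, rfl⟩
    · rintro S ⟨y, hyB, rfl⟩
      exact sc.arc_image_preconnected ι hiso x y
  refine ⟨closure (ι '' B), ?_, hpre.closure, ?_⟩
  · refine Filter.mem_of_superset (Metric.ball_mem_nhds p (by positivity : (0:ℝ) < ε/8)) ?_
    intro q hq
    rw [Metric.mem_closure_iff]
    intro δ hδ
    obtain ⟨z, hz⟩ := hdense.exists_dist_lt q (lt_min hδ (by positivity : (0:ℝ) < ε/8))
    refine ⟨ι z, ⟨z, ?_, rfl⟩, lt_of_lt_of_le hz (min_le_left _ _)⟩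
    rw [hB, Set.mem_setOf_eq]
    have h1 : dist (ι x) (ι z) ≤ dist (ι x) p + dist p q + dist q (ι z) := dist_triangle4 _ _ _ _
    have h2 : dist (ι x) p < ε/4 := by rw [dist_comm]; exact hx
    have h3 : dist p q < ε/8 := by rw [dist_comm]; exact Metric.mem_ball.mp hq
    have h4 : dist q (ι z) < ε/8 := lt_of_lt_of_le hz (min_le_right _ _)
    linarith
  · intro q hq
    apply hball
    have hsub : ι '' B ⊆ Metric.closedBall (ι x) (ε/2) := by
      rintro w ⟨z, hzB, rfl⟩
      rw [Metric.mem_closedBall, dist_comm]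
      exact (le_of_lt hzB)
    have hq' : q ∈ Metric.closedBall (ι x) (ε/2) :=
      closure_minimal hsub Metric.isClosed_closedBall hq
    rw [Metric.mem_closedBall] at hq'
    rw [Metric.mem_ball]
    have : dist q p ≤ dist q (ι x) + dist (ι x) p := dist_triangle _ _ _
    have h2 : dist (ι x) p < ε/4 := by rw [dist_comm]; exact hx
    linarith
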